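/- Let P and Q be real cyclic Hankel matrices of order n. Then the Böttcher–Wenzel form 2(‖P‖²‖Q‖² − trace(PᵀQ)²) − ‖PQ − QP‖² is nonnegative; indeed it equals 2n(n Σ_{1≤i<j≤n} z_{i,j}² − Σ_{i=1}^{k} t_i²) where z_{i,j} = p_i q_j − q_i p_j, k = ⌊(n−1)/2⌋, and t_i = Σ_{j=1}^{n−i} z_{j,i+j} − Σ_{j=1}^{i} z_{j,n−i+j}, and this quantity is ≥ 0. -/

import Mathlib

open Matrix Finset

namespace CHBW

lemma icc_sum (f : ℕ → ℝ) (N : ℕ) :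
    ∑ j ∈ Finset.Icc 1 N, f j = ∑ m ∈ Finset.range N, f (m + 1) := by
  rw [← Finset.Ico_add_one_right_eq_Icc, Finset.sum_Ico_eq_sum_range]
  exact Finset.sum_congr rfl fun m _ => by rw [Nat.add_comm]

lemma sum_guard (f : ℕ → ℝ) {b N : ℕ} (hb : b ≤ N) :
    ∑ j ∈ Finset.Icc 1 b, f j = ∑ j ∈ Finset.Icc 1 N, if j ≤ b then f j else 0 := by
  rw [show (∑ j ∈ Finset.Icc 1 b, f j) = ∑ j ∈ Finset.Icc 1 b, (if j ≤ b then f j else 0) from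
    Finset.sum_congr rfl fun j hj => by simp [(Finset.mem_Icc.1 hj).2]]
  exact Finset.sum_subset (Finset.Icc_subset_Icc_right hb) (fun x hx hxb => by
    simp only [Finset.mem_Icc] at hx hxb
    rw [if_neg (by omega)])

lemma sum_guard' (f : ℕ → ℝ) {c N : ℕ} (hc : 1 ≤ c) :
    ∑ j ∈ Finset.Icc c N, f j = ∑ j ∈ Finset.Icc 1 N, if c ≤ j then f j else 0 := by
  rw [show (∑ j ∈ Finset.Icc c N, f j) = ∑ j ∈ Finset.Icc c N, (if c ≤ j then f j else 0) from
    Finset.sum_congr rfl fun j hj => by simp [(Finset.mem_Icc.1 hj).1]]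
  exact Finset.sum_subset (Finset.Icc_subset_Icc_left hc) (fun x hx hxb => by
    simp only [Finset.mem_Icc] at hx hxb
    rw [if_neg (by omega)])

lemma fin_shift (n : ℕ) [NeZero n] (F : ℕ → ℝ) (i : Fin n) :
    ∑ j : Fin n, F ((i.val + j.val) % n) = ∑ m ∈ Finset.range n, F m := by
  rw [Finset.sum_congr rfl (fun j (_ : j ∈ Finset.univ) =>
    show F ((i.val + j.val) % n) = (fun m : Fin n => F m.val) (i + j) by
      simp only [Fin.val_add])]
  rw [show (∑ j : Fin n, (fun m : Fin n => F m.val) (i + j))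
      = ∑ m : Fin n, F m.val from Equiv.sum_comp (Equiv.addLeft i) (fun m : Fin n => F m.val)]
  exact Fin.sum_univ_eq_sum_range (fun m => F m) n

lemma fin_sub (n : ℕ) [NeZero n] (F : ℕ → ℝ) (j : Fin n) :
    ∑ i : Fin n, F ((j - i : Fin n).val) = ∑ m ∈ Finset.range n, F m := by
  rw [show (∑ i : Fin n, F ((j - i : Fin n).val)) =
      ∑ i : Fin n, (fun m : Fin n => F m.val) (Equiv.subLeft j i) from rfl]
  rw [show (∑ i : Fin n, (fun m : Fin n => F m.val) (Equiv.subLeft j i))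
      = ∑ m : Fin n, F m.val from Equiv.sum_comp (Equiv.subLeft j) (fun m : Fin n => F m.val)]
  exact Fin.sum_univ_eq_sum_range (fun m => F m) n

lemma trace_transpose_mul_eq (n : ℕ) (M N : Matrix (Fin n) (Fin n) ℝ) :
    Matrix.trace (Mᵀ * N) = ∑ j : Fin n, ∑ i : Fin n, M i j * N i j := by
  simp [Matrix.trace, Matrix.diag, Matrix.mul_apply, Matrix.transpose_apply]

lemma trace_entrywise (n : ℕ) [NeZero n] (f g : ℕ → ℝ) (M N : Matrix (Fin n) (Fin n) ℝ)
    (hM : ∀ i j, M i j = f ((i.val + j.val) % n))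
    (hN : ∀ i j, N i j = g ((i.val + j.val) % n)) :
    Matrix.trace (Mᵀ * N) = n * ∑ m ∈ Finset.range n, f m * g m := by
  rw [trace_transpose_mul_eq]
  rw [Finset.sum_congr rfl (fun j (_ : j ∈ Finset.univ) =>
    show (∑ i : Fin n, M i j * N i j) = ∑ m ∈ Finset.range n, f m * g m by
      rw [← fin_shift n (fun m => f m * g m) j]
      exact Finset.sum_congr rfl fun i _ => by rw [hM, hN, Nat.add_comm i.val j.val])]
  rw [Finset.sum_const, Finset.card_univ, Fintype.card_fin, nsmul_eq_mul]

noncomputable def hf (n : ℕ) (z : ℕ → ℕ → ℝ) (d : ℕ) : ℝ :=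
  ∑ m ∈ Finset.range n, z (m + 1) ((m + d) % n + 1)

lemma mod_cancel {n m d : ℕ} (hm : m < n) (hd : d ≤ n) :
    ((m + d) % n + (n - d)) % n = m := by
  rw [Nat.mod_add_mod]
  rw [show m + d + (n - d) = m + n by omega, Nat.add_mod_right]
  exact Nat.mod_eq_of_lt hm

lemma mul_entry (n : ℕ) [NeZero n] (p q : ℕ → ℝ) (P Q : Matrix (Fin n) (Fin n) ℝ)
    (hP : ∀ i j, P i j = p ((i.val + j.val) % n + 1))
    (hQ : ∀ i j, Q i j = q ((i.val + j.val) % n + 1)) (i j : Fin n) :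
    (P * Q) i j = ∑ m ∈ Finset.range n,
      p (m + 1) * q ((m + (j - i : Fin n).val) % n + 1) := by
  rw [Matrix.mul_apply]
  rw [Finset.sum_congr rfl (fun k (_ : k ∈ Finset.univ) =>
    show P i k * Q k j
        = (fun m : Fin n => p (m.val + 1) * q ((m + (j - i)).val + 1)) (i + k) by
      simp only
      rw [hP, hQ, show (i + k) + (j - i) = k + j by abel, Fin.val_add, Fin.val_add])]
  rw [show (∑ k : Fin n, (fun m : Fin n => p (m.val + 1) * q ((m + (j - i)).val + 1)) (i + k))
      = ∑ m : Fin n, p (m.val + 1) * q ((m + (j - i)).val + 1) from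
    Equiv.sum_comp (Equiv.addLeft i) (fun m : Fin n => p (m.val + 1) * q ((m + (j - i)).val + 1))]
  rw [Finset.sum_congr rfl (fun m (_ : m ∈ Finset.univ) =>
    show p (m.val + 1) * q ((m + (j - i)).val + 1)
        = (fun a : ℕ => p (a + 1) * q ((a + (j - i : Fin n).val) % n + 1)) m.val by
      simp only [Fin.val_add])]
  exact Fin.sum_univ_eq_sum_range
    (fun a => p (a + 1) * q ((a + (j - i : Fin n).val) % n + 1)) n

lemma comm_entry (n : ℕ) [NeZero n] (p q : ℕ → ℝ) (P Q : Matrix (Fin n) (Fin n) ℝ)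
    (hP : ∀ i j, P i j = p ((i.val + j.val) % n + 1))
    (hQ : ∀ i j, Q i j = q ((i.val + j.val) % n + 1))
    (z : ℕ → ℕ → ℝ) (hz : ∀ a b, z a b = p a * q b - q a * p b) (i j : Fin n) :
    (P * Q - Q * P) i j = hf n z ((j - i : Fin n).val) := by
  rw [Matrix.sub_apply, mul_entry n p q P Q hP hQ i j, mul_entry n q p Q P hQ hP i j,
    ← Finset.sum_sub_distrib]
  exact Finset.sum_congr rfl fun m _ => by rw [hz]

lemma comm_trace (n : ℕ) [NeZero n] (p q : ℕ → ℝ) (P Q : Matrix (Fin n) (Fin n) ℝ)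
    (hP : ∀ i j, P i j = p ((i.val + j.val) % n + 1))
    (hQ : ∀ i j, Q i j = q ((i.val + j.val) % n + 1))
    (z : ℕ → ℕ → ℝ) (hz : ∀ a b, z a b = p a * q b - q a * p b) :
    Matrix.trace ((P * Q - Q * P)ᵀ * (P * Q - Q * P))
      = n * ∑ d ∈ Finset.range n, (hf n z d) ^ 2 := by
  rw [trace_transpose_mul_eq]
  rw [Finset.sum_congr rfl (fun j (_ : j ∈ Finset.univ) =>
    show (∑ i : Fin n, (P * Q - Q * P) i j * (P * Q - Q * P) i j)
        = ∑ d ∈ Finset.range n, (hf n z d) ^ 2 by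
      rw [← fin_sub n (fun d => (hf n z d) ^ 2) j]
      exact Finset.sum_congr rfl fun i _ => by
        rw [comm_entry n p q P Q hP hQ z hz i j]; ring)]
  rw [Finset.sum_const, Finset.card_univ, Fintype.card_fin, nsmul_eq_mul]


lemma hf_zero (n : ℕ) (z : ℕ → ℕ → ℝ) (hzd : ∀ a, z a a = 0) : hf n z 0 = 0 := by
  refine Finset.sum_eq_zero fun m hm => ?_
  have hm' := Finset.mem_range.1 hm
  rw [show (m + 0) % n = m from by rw [Nat.add_zero]; exact Nat.mod_eq_of_lt hm']
  exact hzd _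

lemma hf_neg (n : ℕ) (z : ℕ → ℕ → ℝ) (hzas : ∀ a b, z a b = - z b a)
    {d : ℕ} (hd0 : 0 < d) (hdn : d < n) : hf n z (n - d) = - hf n z d := by
  unfold hf
  rw [← Finset.sum_neg_distrib]
  refine Finset.sum_nbij' (fun a => (a + (n - d)) % n) (fun b => (b + d) % n)
    (fun a _ => Finset.mem_range.2 (Nat.mod_lt (a + (n - d)) (by omega)))
    (fun b _ => Finset.mem_range.2 (Nat.mod_lt (b + d) (by omega))) ?_ ?_ ?_
  · intro a ha
    have := mod_cancel (n := n) (m := a) (d := n - d) (Finset.mem_range.1 ha) (by omega)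
    rwa [Nat.sub_sub_self (by omega : d ≤ n)] at this
  · intro b hb
    exact mod_cancel (Finset.mem_range.1 hb) (by omega)
  · intro a ha
    have h1 : ((a + (n - d)) % n + d) % n = a := by
      have := mod_cancel (n := n) (m := a) (d := n - d) (Finset.mem_range.1 ha) (by omega)
      rwa [Nat.sub_sub_self (by omega : d ≤ n)] at this
    rw [h1, hzas]

lemma split_sum (n d : ℕ) (hdn : d ≤ n) (F : ℕ → ℝ) :
    ∑ m ∈ Finset.range n, F m
      = (∑ k ∈ Finset.range (n - d), F k) + ∑ k ∈ Finset.range d, F (n - d + k) := by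
  have h := Finset.sum_Ico_consecutive F (Nat.zero_le (n - d)) (Nat.sub_le n d)
  rw [← Finset.range_eq_Ico, ← Finset.range_eq_Ico] at h
  rw [← h, Finset.sum_Ico_eq_sum_range, Nat.sub_sub_self hdn]

lemma hf_eq_t (n : ℕ) (z : ℕ → ℕ → ℝ) (hzas : ∀ a b, z a b = - z b a)
    (t : ℕ → ℝ)
    (ht : ∀ i, t i = (∑ j ∈ Finset.Icc 1 (n - i), z j (i + j)) -
        ∑ j ∈ Finset.Icc 1 i, z j (n - i + j))
    {d : ℕ} (hd0 : 1 ≤ d) (hdn : d ≤ n) : hf n z d = t d := by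
  rw [ht d, icc_sum (fun j => z j (d + j)) (n - d), icc_sum (fun j => z j (n - d + j)) d]
  unfold hf
  rw [split_sum n d hdn]
  congr 1
  · refine Finset.sum_congr rfl fun m hm => ?_
    have hm' := Finset.mem_range.1 hm
    rw [Nat.mod_eq_of_lt (show m + d < n by omega), show d + (m + 1) = m + d + 1 by omega]
  · rw [← Finset.sum_neg_distrib]
    refine Finset.sum_congr rfl fun k hk => ?_
    have hk' := Finset.mem_range.1 hk
    have h1 : (n - d + k + d) % n = k := by
      rw [show n - d + k + d = n + k by omega, Nat.add_mod_left]
      exact Nat.mod_eq_of_lt (by omega)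
    rw [h1, hzas, Nat.add_assoc]

lemma sq_split (n : ℕ) (z : ℕ → ℕ → ℝ) (hzas : ∀ a b, z a b = - z b a)
    {d : ℕ} (hdn : d ≤ n) :
    ∑ m ∈ Finset.range n, (z (m + 1) ((m + d) % n + 1)) ^ 2
      = (∑ j ∈ Finset.Icc 1 (n - d), (z j (d + j)) ^ 2)
        + ∑ j ∈ Finset.Icc 1 d, (z j (n - d + j)) ^ 2 := by
  rw [icc_sum (fun j => (z j (d + j)) ^ 2) (n - d), icc_sum (fun j => (z j (n - d + j)) ^ 2) d]
  rw [split_sum n d hdn (fun m => (z (m + 1) ((m + d) % n + 1)) ^ 2)]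
  congr 1
  · refine Finset.sum_congr rfl fun m hm => ?_
    have hm' := Finset.mem_range.1 hm
    rw [Nat.mod_eq_of_lt (show m + d < n by omega), show d + (m + 1) = m + d + 1 by omega]
  · refine Finset.sum_congr rfl fun k hk => ?_
    have hk' := Finset.mem_range.1 hk
    have h1 : (n - d + k + d) % n = k := by
      rw [show n - d + k + d = n + k by omega, Nat.add_mod_left]
      exact Nat.mod_eq_of_lt (by omega)
    rw [h1, hzas, Nat.add_assoc]
    ring

lemma hf_sq_le (n : ℕ) (z : ℕ → ℕ → ℝ) (d : ℕ) :
    (hf n z d) ^ 2 ≤ n * ∑ m ∈ Finset.range n, (z (m + 1) ((m + d) % n + 1)) ^ 2 := by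
  have h := Finset.sum_mul_sq_le_sq_mul_sq (Finset.range n) (fun _ => (1 : ℝ))
    (fun m => z (m + 1) ((m + d) % n + 1))
  simpa [hf] using h


lemma icc_split (N i : ℕ) (h2 : i ≤ N) (f : ℕ → ℝ) :
    ∑ j ∈ Finset.Icc 1 N, f j
      = ∑ j ∈ Finset.Icc 1 i, f j + ∑ j ∈ Finset.Icc (i + 1) N, f j := by
  have h := Finset.sum_Ico_consecutive f (show 1 ≤ i + 1 by omega) (show i + 1 ≤ N + 1 by omega)
  rw [Finset.Ico_add_one_right_eq_Icc, Finset.Ico_add_one_right_eq_Icc, Finset.Ico_add_one_right_eq_Icc] at h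
  exact h.symm

lemma lagrange (N : ℕ) (a b : ℕ → ℝ) :
    (∑ i ∈ Finset.Icc 1 N, a i ^ 2) * (∑ i ∈ Finset.Icc 1 N, b i ^ 2)
        - (∑ i ∈ Finset.Icc 1 N, a i * b i) ^ 2
      = ∑ i ∈ Finset.Icc 1 N, ∑ j ∈ Finset.Icc (i + 1) N, (a i * b j - b i * a j) ^ 2 := by
  set w : ℕ → ℕ → ℝ := fun i j => (a i * b j - b i * a j) ^ 2 with hw
  set A := ∑ i ∈ Finset.Icc 1 N, a i ^ 2 with hA
  set B := ∑ i ∈ Finset.Icc 1 N, b i ^ 2 with hB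
  set C := ∑ i ∈ Finset.Icc 1 N, a i * b i with hC
  have hsym : ∀ i j, w i j = w j i := fun i j => by simp only [hw]; ring
  have hdiag : ∀ i, w i i = 0 := fun i => by simp only [hw]; ring
  have full : ∑ i ∈ Finset.Icc 1 N, ∑ j ∈ Finset.Icc 1 N, w i j = 2 * (A * B - C ^ 2) := by
    calc ∑ i ∈ Finset.Icc 1 N, ∑ j ∈ Finset.Icc 1 N, w i j
        = ∑ i ∈ Finset.Icc 1 N, ∑ j ∈ Finset.Icc 1 N,
            (a i ^ 2 * b j ^ 2 + b i ^ 2 * a j ^ 2 - (2 * (a i * b i)) * (a j * b j)) :=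
          Finset.sum_congr rfl fun i _ => Finset.sum_congr rfl fun j _ => by
            simp only [hw]; ring
      _ = ∑ i ∈ Finset.Icc 1 N, (a i ^ 2 * B + b i ^ 2 * A - (2 * (a i * b i)) * C) :=
          Finset.sum_congr rfl fun i _ => by
            rw [Finset.sum_sub_distrib, Finset.sum_add_distrib, ← Finset.mul_sum,
              ← Finset.mul_sum, ← Finset.mul_sum, ← hA, ← hB, ← hC]
      _ = A * B + B * A - (2 * C) * C := by
          rw [Finset.sum_sub_distrib, Finset.sum_add_distrib, ← Finset.sum_mul,
            ← Finset.sum_mul, ← Finset.sum_mul, ← Finset.mul_sum, ← hA, ← hB, ← hC]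
      _ = 2 * (A * B - C ^ 2) := by ring
  have half : ∑ i ∈ Finset.Icc 1 N, ∑ j ∈ Finset.Icc 1 N, w i j
      = 2 * ∑ i ∈ Finset.Icc 1 N, ∑ j ∈ Finset.Icc (i + 1) N, w i j := by
    have hsplit : ∑ i ∈ Finset.Icc 1 N, ∑ j ∈ Finset.Icc 1 N, w i j
        = ∑ i ∈ Finset.Icc 1 N, ∑ j ∈ Finset.Icc 1 i, w i j
          + ∑ i ∈ Finset.Icc 1 N, ∑ j ∈ Finset.Icc (i + 1) N, w i j := by
      rw [← Finset.sum_add_distrib]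
      exact Finset.sum_congr rfl fun i hi =>
        icc_split N i (Finset.mem_Icc.1 hi).2 (w i)
    have hlow : ∑ i ∈ Finset.Icc 1 N, ∑ j ∈ Finset.Icc 1 i, w i j
        = ∑ i ∈ Finset.Icc 1 N, ∑ j ∈ Finset.Icc (i + 1) N, w i j := by
      calc ∑ i ∈ Finset.Icc 1 N, ∑ j ∈ Finset.Icc 1 i, w i j
          = ∑ i ∈ Finset.Icc 1 N, ∑ j ∈ Finset.Icc 1 N, (if j ≤ i then w i j else 0) :=
            Finset.sum_congr rfl fun i hi => sum_guard (w i) (Finset.mem_Icc.1 hi).2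
        _ = ∑ j ∈ Finset.Icc 1 N, ∑ i ∈ Finset.Icc 1 N, (if j ≤ i then w i j else 0) :=
            Finset.sum_comm
        _ = ∑ j ∈ Finset.Icc 1 N, ∑ i ∈ Finset.Icc 1 N, (if j + 1 ≤ i then w j i else 0) := by
            refine Finset.sum_congr rfl fun j _ => Finset.sum_congr rfl fun i _ => ?_
            by_cases h : i = j
            · subst h; simp [hdiag]
            · by_cases h2 : j ≤ i
              · rw [if_pos h2, if_pos (by omega), hsym]
              · rw [if_neg h2, if_neg (by omega)]
        _ = ∑ j ∈ Finset.Icc 1 N, ∑ i ∈ Finset.Icc (j + 1) N, w j i :=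
            Finset.sum_congr rfl fun j _ => (sum_guard' (w j) (by omega)).symm
    rw [hsplit, hlow]; ring
  linarith [full, half]

lemma gap (n : ℕ) (w : ℕ → ℕ → ℝ) :
    ∑ i ∈ Finset.Icc 1 n, ∑ j ∈ Finset.Icc (i + 1) n, w i j
      = ∑ d ∈ Finset.Icc 1 (n - 1), ∑ j ∈ Finset.Icc 1 (n - d), w j (d + j) := by
  calc ∑ i ∈ Finset.Icc 1 n, ∑ j ∈ Finset.Icc (i + 1) n, w i j
      = ∑ i ∈ Finset.Icc 1 n, ∑ d ∈ Finset.Icc 1 (n - i), w i (i + d) := by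
        refine Finset.sum_congr rfl fun i hi => ?_
        have hi' := Finset.mem_Icc.1 hi
        rw [icc_sum (fun d => w i (i + d)) (n - i), ← Finset.Ico_add_one_right_eq_Icc,
          Finset.sum_Ico_eq_sum_range, show n + 1 - (i + 1) = n - i by omega]
        exact Finset.sum_congr rfl fun m _ => by rw [show i + 1 + m = i + (m + 1) by omega]
    _ = ∑ i ∈ Finset.Icc 1 n, ∑ d ∈ Finset.Icc 1 n, (if d ≤ n - i then w i (i + d) else 0) :=
        Finset.sum_congr rfl fun i _ => sum_guard _ (Nat.sub_le n i)
    _ = ∑ d ∈ Finset.Icc 1 n, ∑ i ∈ Finset.Icc 1 n, (if d ≤ n - i then w i (i + d) else 0) :=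
        Finset.sum_comm
    _ = ∑ d ∈ Finset.Icc 1 n, ∑ i ∈ Finset.Icc 1 n, (if i ≤ n - d then w i (d + i) else 0) := by
        refine Finset.sum_congr rfl fun d hd => Finset.sum_congr rfl fun i hi => ?_
        have hd' := Finset.mem_Icc.1 hd
        have hi' := Finset.mem_Icc.1 hi
        by_cases h : d + i ≤ n
        · rw [if_pos (by omega), if_pos (by omega), show i + d = d + i by omega]
        · rw [if_neg (by omega), if_neg (by omega)]
    _ = ∑ d ∈ Finset.Icc 1 n, ∑ i ∈ Finset.Icc 1 (n - d), w i (d + i) :=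
        Finset.sum_congr rfl fun d _ => (sum_guard _ (Nat.sub_le n d)).symm
    _ = ∑ d ∈ Finset.Icc 1 (n - 1), ∑ i ∈ Finset.Icc 1 (n - d), w i (d + i) := by
        symm
        refine Finset.sum_subset (Finset.Icc_subset_Icc_right (by omega)) ?_
        intro x hx hx'
        simp only [Finset.mem_Icc] at hx hx'
        rw [show n - x = 0 by omega]
        rw [show Finset.Icc 1 0 = (∅ : Finset ℕ) from Finset.Icc_eq_empty (by omega)]
        exact Finset.sum_empty

lemma range_sumsq (n : ℕ) (hn : 0 < n) (z : ℕ → ℕ → ℝ)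
    (hzd : ∀ a, z a a = 0) (hzas : ∀ a b, z a b = - z b a) :
    ∑ d ∈ Finset.range n, (hf n z d) ^ 2
      = 2 * ∑ d ∈ Finset.Icc 1 ((n - 1) / 2), (hf n z d) ^ 2 := by
  set k := (n - 1) / 2 with hk
  have h1 : ∑ d ∈ Finset.range n, (hf n z d) ^ 2
      = ∑ d ∈ Finset.Icc 1 (n - 1), (hf n z d) ^ 2 := by
    have h := Finset.sum_Ico_consecutive (fun d => (hf n z d) ^ 2)
      (Nat.zero_le 1) (show 1 ≤ n by omega)
    rw [← Finset.range_eq_Ico, ← Finset.range_eq_Ico] at h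
    have he : Finset.Ico 1 n = Finset.Icc 1 (n - 1) := by
      rw [← Finset.Ico_add_one_right_eq_Icc]; congr 1; omega
    rw [← h, he, Finset.sum_range_one, hf_zero n z hzd]
    ring
  rw [h1]
  have hsplit := icc_split (n - 1) k (by omega) (fun d => (hf n z d) ^ 2)
  have h3 : ∑ d ∈ Finset.Icc (k + 1) (n - 1), (hf n z d) ^ 2
      = ∑ d ∈ Finset.Icc 1 (n - 1 - k), (hf n z (n - d)) ^ 2 := by
    refine Finset.sum_nbij' (fun d => n - d) (fun d => n - d)
      (fun d hd => ?_) (fun d hd => ?_) (fun d hd => ?_) (fun d hd => ?_) (fun d hd => ?_)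
    · simp only [Finset.mem_Icc] at hd ⊢; omega
    · simp only [Finset.mem_Icc] at hd ⊢; omega
    · simp only [Finset.mem_Icc] at hd; exact show n - (n - d) = d by omega
    · simp only [Finset.mem_Icc] at hd; exact show n - (n - d) = d by omega
    · simp only [Finset.mem_Icc] at hd
      rw [Nat.sub_sub_self (show d ≤ n by omega)]
  have h4 : ∑ d ∈ Finset.Icc 1 (n - 1 - k), (hf n z (n - d)) ^ 2
      = ∑ d ∈ Finset.Icc 1 (n - 1 - k), (hf n z d) ^ 2 := by
    refine Finset.sum_congr rfl fun d hd => ?_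
    simp only [Finset.mem_Icc] at hd
    rw [hf_neg n z hzas (show 0 < d by omega) (show d < n by omega)]
    ring
  rcases (show n - 1 - k = k ∨ (n - 1 - k = k + 1 ∧ k + 1 = n - (k + 1) ∧ k + 1 < n) by omega)
    with hc | ⟨hc, hc2, hc3⟩
  · rw [hsplit, h3, h4, hc]; ring
  · have hzero : hf n z (k + 1) = 0 := by
      have h5 := hf_neg n z hzas (show 0 < k + 1 by omega) hc3
      rw [← hc2] at h5
      linarith
    rw [hsplit, h3, h4, hc, Finset.sum_Icc_succ_top (by omega), hzero]
    ring

lemma t_bound (n : ℕ) (hn : 0 < n) (z : ℕ → ℕ → ℝ) (hzas : ∀ a b, z a b = - z b a) :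
    ∑ d ∈ Finset.Icc 1 ((n - 1) / 2), (hf n z d) ^ 2
      ≤ n * ∑ i ∈ Finset.Icc 1 n, ∑ j ∈ Finset.Icc (i + 1) n, (z i j) ^ 2 := by
  set k := (n - 1) / 2 with hk
  set S : ℕ → ℝ := fun d => ∑ j ∈ Finset.Icc 1 (n - d), (z j (d + j)) ^ 2 with hS
  have hSnn : ∀ d, 0 ≤ S d := fun d => Finset.sum_nonneg fun j _ => sq_nonneg _
  have hgap : ∑ i ∈ Finset.Icc 1 n, ∑ j ∈ Finset.Icc (i + 1) n, (z i j) ^ 2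
      = ∑ d ∈ Finset.Icc 1 (n - 1), S d := gap n (fun i j => (z i j) ^ 2)
  rw [hgap]
  have step1 : ∀ d ∈ Finset.Icc 1 k, (hf n z d) ^ 2 ≤ n * (S d + S (n - d)) := by
    intro d hd
    have hd' := Finset.mem_Icc.1 hd
    have hdn : d ≤ n := by omega
    have h1 := hf_sq_le n z d
    rw [sq_split n z hzas hdn] at h1
    have h3 : S (n - d) = ∑ j ∈ Finset.Icc 1 d, (z j (n - d + j)) ^ 2 := by
      simp only [hS, Nat.sub_sub_self hdn]
    rw [h3]
    exact h1
  calc ∑ d ∈ Finset.Icc 1 k, (hf n z d) ^ 2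
      ≤ ∑ d ∈ Finset.Icc 1 k, (n : ℝ) * (S d + S (n - d)) := Finset.sum_le_sum step1
    _ = n * (∑ d ∈ Finset.Icc 1 k, S d + ∑ d ∈ Finset.Icc 1 k, S (n - d)) := by
        rw [← Finset.mul_sum, Finset.sum_add_distrib]
    _ = n * (∑ d ∈ Finset.Icc 1 k, S d + ∑ d ∈ Finset.Icc (n - k) (n - 1), S d) := by
        congr 2
        refine Finset.sum_nbij' (fun d => n - d) (fun d => n - d)
          (fun d hd => ?_) (fun d hd => ?_) (fun d hd => ?_) (fun d hd => ?_) (fun d hd => ?_)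
        · simp only [Finset.mem_Icc] at hd ⊢; omega
        · simp only [Finset.mem_Icc] at hd ⊢; omega
        · simp only [Finset.mem_Icc] at hd; exact show n - (n - d) = d by omega
        · simp only [Finset.mem_Icc] at hd; exact show n - (n - d) = d by omega
        · rfl
    _ ≤ n * ∑ d ∈ Finset.Icc 1 (n - 1), S d := by
        have hd2 : Disjoint (Finset.Icc 1 k) (Finset.Icc (n - k) (n - 1)) := by
          rw [Finset.disjoint_left]
          intro x hx hx'
          simp only [Finset.mem_Icc] at hx hx'
          omega
        rw [← Finset.sum_union hd2]
        have hsub : (Finset.Icc 1 k ∪ Finset.Icc (n - k) (n - 1)) ⊆ Finset.Icc 1 (n - 1) := by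
          intro x hx
          simp only [Finset.mem_union, Finset.mem_Icc] at hx ⊢
          omega
        exact mul_le_mul_of_nonneg_left
          (Finset.sum_le_sum_of_subset_of_nonneg hsub (fun i _ _ => hSnn i))
          (by positivity)

end CHBW

open Matrix

/-- For cyclic Hankel matrices the Böttcher–Wenzel form equals
`2n(n ∑_{i<j} z_{i,j}² − ∑_{i=1}^k t_i²)` with `k = ⌊(n−1)/2⌋`, and is nonnegative. -/
theorem cyclic_hankel_bw (n : ℕ) (hn : 0 < n) (p q : ℕ → ℝ)
    (P Q : Matrix (Fin n) (Fin n) ℝ)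
    (hP : ∀ i j, P i j = p ((i.val + j.val) % n + 1))
    (hQ : ∀ i j, Q i j = q ((i.val + j.val) % n + 1))
    (z : ℕ → ℕ → ℝ) (hz : ∀ a b, z a b = p a * q b - q a * p b)
    (t : ℕ → ℝ)
    (ht : ∀ i, t i = (∑ j ∈ Finset.Icc 1 (n - i), z j (i + j)) -
        ∑ j ∈ Finset.Icc 1 i, z j (n - i + j)) :
    2 * (Matrix.trace (Pᵀ * P) * Matrix.trace (Qᵀ * Q) -
        (Matrix.trace (Pᵀ * Q)) ^ 2) -
      Matrix.trace ((P * Q - Q * P)ᵀ * (P * Q - Q * P)) =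
        2 * n * ((n : ℝ) * (∑ i ∈ Finset.Icc 1 n, ∑ j ∈ Finset.Icc (i + 1) n, z i j ^ 2) -
          ∑ i ∈ Finset.Icc 1 ((n - 1) / 2), t i ^ 2) ∧
    0 ≤ 2 * (Matrix.trace (Pᵀ * P) * Matrix.trace (Qᵀ * Q) -
        (Matrix.trace (Pᵀ * Q)) ^ 2) -
      Matrix.trace ((P * Q - Q * P)ᵀ * (P * Q - Q * P)) := by
  haveI : NeZero n := ⟨hn.ne'⟩
  have hzas : ∀ a b, z a b = - z b a := fun a b => by rw [hz, hz]; ring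
  have hzd : ∀ a, z a a = 0 := fun a => by rw [hz]; ring
  have hPP := CHBW.trace_entrywise n (fun m => p (m + 1)) (fun m => p (m + 1)) P P
    (fun i j => hP i j) (fun i j => hP i j)
  have hQQ := CHBW.trace_entrywise n (fun m => q (m + 1)) (fun m => q (m + 1)) Q Q
    (fun i j => hQ i j) (fun i j => hQ i j)
  have hPQ := CHBW.trace_entrywise n (fun m => p (m + 1)) (fun m => q (m + 1)) P Q
    (fun i j => hP i j) (fun i j => hQ i j)
  have hC := CHBW.comm_trace n p q P Q hP hQ z hz
  rw [CHBW.range_sumsq n hn z hzd hzas] at hC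
  have hA : ∑ m ∈ Finset.range n, p (m + 1) * p (m + 1) = ∑ i ∈ Finset.Icc 1 n, p i ^ 2 := by
    rw [CHBW.icc_sum (fun i => p i ^ 2) n]
    exact Finset.sum_congr rfl fun m _ => (pow_two (p (m + 1))).symm
  have hB : ∑ m ∈ Finset.range n, q (m + 1) * q (m + 1) = ∑ i ∈ Finset.Icc 1 n, q i ^ 2 := by
    rw [CHBW.icc_sum (fun i => q i ^ 2) n]
    exact Finset.sum_congr rfl fun m _ => (pow_two (q (m + 1))).symm
  have hCab : ∑ m ∈ Finset.range n, p (m + 1) * q (m + 1)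
      = ∑ i ∈ Finset.Icc 1 n, p i * q i := by
    rw [CHBW.icc_sum (fun i => p i * q i) n]
  rw [hA] at hPP
  rw [hB] at hQQ
  rw [hCab] at hPQ
  have hW : (∑ i ∈ Finset.Icc 1 n, p i ^ 2) * (∑ i ∈ Finset.Icc 1 n, q i ^ 2)
      - (∑ i ∈ Finset.Icc 1 n, p i * q i) ^ 2
      = ∑ i ∈ Finset.Icc 1 n, ∑ j ∈ Finset.Icc (i + 1) n, z i j ^ 2 := by
    rw [CHBW.lagrange n p q]
    exact Finset.sum_congr rfl fun i _ => Finset.sum_congr rfl fun j _ => by rw [hz]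
  have hThf : ∑ i ∈ Finset.Icc 1 ((n - 1) / 2), t i ^ 2
      = ∑ i ∈ Finset.Icc 1 ((n - 1) / 2), (CHBW.hf n z i) ^ 2 := by
    refine Finset.sum_congr rfl fun i hi => ?_
    have hi' := Finset.mem_Icc.1 hi
    rw [← CHBW.hf_eq_t n z hzas t ht (by omega) (by omega)]
  have hbound := CHBW.t_bound n hn z hzas
  have heq : 2 * (Matrix.trace (Pᵀ * P) * Matrix.trace (Qᵀ * Q) -
        (Matrix.trace (Pᵀ * Q)) ^ 2) -
      Matrix.trace ((P * Q - Q * P)ᵀ * (P * Q - Q * P)) =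
        2 * n * ((n : ℝ) * (∑ i ∈ Finset.Icc 1 n, ∑ j ∈ Finset.Icc (i + 1) n, z i j ^ 2) -
          ∑ i ∈ Finset.Icc 1 ((n - 1) / 2), t i ^ 2) := by
    rw [hPP, hQQ, hPQ, hC, ← hW, hThf]
    ring
  refine ⟨heq, ?_⟩
  rw [heq, hThf]
  have h2 : (0 : ℝ) ≤ 2 * n := by positivity
  exact mul_nonneg h2 (by linarith)
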